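/- Let μ be a probability Borel measure on (0,∞) with ∫ λ dμ(λ) ≤ 1 and ∫ λ^r dμ > 0 for r ∈ (0,1]. Define S_α = (1/(α−1)) log ∫ λ^{1−α} dμ(λ) for α ∈ (0,1). Then S_α ≥ 0 for all α ∈ (0,1) and α ↦ S_α is monotonically increasing on (0,1). -/

import Mathlib

open MeasureTheory

private lemma integrable_rpow_aux (μ : Measure ℝ) [IsProbabilityMeasure μ]
    (hpos : ∀ᵐ l ∂μ, 0 < l) (hlam : Integrable (fun l => l) μ)
    {r : ℝ} (hr0 : 0 ≤ r) (hr1 : r ≤ 1) :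
    Integrable (fun l => l ^ r) μ := by
  have hmeas : AEStronglyMeasurable (fun l : ℝ => l ^ r) μ :=
    ((Real.continuous_rpow_const hr0).measurable).aestronglyMeasurable
  refine (integrable_const (1 : ℝ) |>.add hlam).mono' hmeas ?_
  filter_upwards [hpos] with l hl
  have h : l ^ r ≤ 1 + l := by
    rcases le_total l 1 with h1 | h1
    · have := Real.rpow_le_one hl.le h1 hr0
      linarith
    · have := Real.rpow_le_rpow_of_exponent_le h1 hr1
      rw [Real.rpow_one] at this
      linarith
  have hnn : 0 ≤ l ^ r := Real.rpow_nonneg hl.le r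
  simpa [Real.norm_eq_abs, abs_of_nonneg hnn] using h

private lemma key_ineq (μ : Measure ℝ) [IsProbabilityMeasure μ]
    (hpos : ∀ᵐ l ∂μ, 0 < l) (hlam : Integrable (fun l => l) μ)
    {t s : ℝ} (ht : 0 < t) (hts : t ≤ s) (hs1 : s ≤ 1) :
    ∫ l, l ^ t ∂μ ≤ (∫ l, l ^ s ∂μ) ^ (t / s) := by
  have hs : 0 < s := ht.trans_le hts
  set c := t / s with hc
  have hc0 : 0 < c := div_pos ht hs
  have hc1 : c ≤ 1 := (div_le_one hs).2 hts
  have hconc : ConcaveOn ℝ (Set.Ici 0) fun x : ℝ => x ^ c :=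
    Real.concaveOn_rpow hc0.le hc1
  have hcont : ContinuousOn (fun x : ℝ => x ^ c) (Set.Ici 0) :=
    (Real.continuous_rpow_const hc0.le).continuousOn
  have hfs : ∀ᵐ l ∂μ, l ^ s ∈ Set.Ici (0 : ℝ) := by
    filter_upwards [hpos] with l hl using Real.rpow_nonneg hl.le s
  have hfi : Integrable (fun l => l ^ s) μ :=
    integrable_rpow_aux μ hpos hlam hs.le hs1
  have hcomp : ∀ᵐ l ∂μ, (l ^ s) ^ c = l ^ t := by
    filter_upwards [hpos] with l hl
    rw [← Real.rpow_mul hl.le]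
    congr 1
    rw [hc]; field_simp [hs.ne']
  have hgi : Integrable ((fun x : ℝ => x ^ c) ∘ fun l => l ^ s) μ := by
    refine (integrable_rpow_aux μ hpos hlam ht.le (hts.trans hs1)).congr ?_
    filter_upwards [hcomp] with l hl using hl.symm
  have := hconc.le_map_integral hcont isClosed_Ici hfs hfi hgi
  calc ∫ l, l ^ t ∂μ = ∫ l, (l ^ s) ^ c ∂μ :=
        integral_congr_ae (by filter_upwards [hcomp] with l hl using hl.symm)
    _ ≤ (∫ l, l ^ s ∂μ) ^ c := this

private lemma slope_mono (μ : Measure ℝ) [IsProbabilityMeasure μ]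
    (hpos : ∀ᵐ l ∂μ, 0 < l) (hlam : Integrable (fun l => l) μ)
    (hposint : ∀ r ∈ Set.Ioc (0 : ℝ) 1, 0 < ∫ l, l ^ r ∂μ)
    {t s : ℝ} (ht : 0 < t) (hts : t ≤ s) (hs1 : s ≤ 1) :
    t⁻¹ * Real.log (∫ l, l ^ t ∂μ) ≤ s⁻¹ * Real.log (∫ l, l ^ s ∂μ) := by
  have hs : 0 < s := ht.trans_le hts
  have hIt : 0 < ∫ l, l ^ t ∂μ := hposint t ⟨ht, hts.trans hs1⟩
  have hIs : 0 < ∫ l, l ^ s ∂μ := hposint s ⟨hs, hs1⟩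
  have h1 := key_ineq μ hpos hlam ht hts hs1
  have h2 : Real.log (∫ l, l ^ t ∂μ) ≤ (t / s) * Real.log (∫ l, l ^ s ∂μ) := by
    calc Real.log (∫ l, l ^ t ∂μ) ≤ Real.log ((∫ l, l ^ s ∂μ) ^ (t / s)) :=
          Real.log_le_log hIt h1
      _ = (t / s) * Real.log (∫ l, l ^ s ∂μ) := Real.log_rpow hIs _
  calc t⁻¹ * Real.log (∫ l, l ^ t ∂μ)
      ≤ t⁻¹ * ((t / s) * Real.log (∫ l, l ^ s ∂μ)) :=
        mul_le_mul_of_nonneg_left h2 (inv_nonneg.2 ht.le)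
    _ = s⁻¹ * Real.log (∫ l, l ^ s ∂μ) := by field_simp

/-- Non-negativity and monotonicity of the Petz–Rényi relative entropy
`S_α = (α-1)⁻¹ log ∫ λ^{1-α} dμ` for a probability measure `μ` on `(0,∞)`
with `∫ λ dμ ≤ 1`. -/
theorem petz_renyi_nonneg_monotone (μ : Measure ℝ) [IsProbabilityMeasure μ]
    (hpos : ∀ᵐ l ∂μ, 0 < l) (hlam : Integrable (fun l => l) μ)
    (hle : ∫ l, l ∂μ ≤ 1)
    (hposint : ∀ r ∈ Set.Ioc (0 : ℝ) 1, 0 < ∫ l, l ^ r ∂μ) :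
    (∀ α ∈ Set.Ioo (0 : ℝ) 1,
      0 ≤ (α - 1)⁻¹ * Real.log (∫ l, l ^ (1 - α) ∂μ)) ∧
    (∀ α ∈ Set.Ioo (0 : ℝ) 1, ∀ β ∈ Set.Ioo (0 : ℝ) 1, α ≤ β →
      (α - 1)⁻¹ * Real.log (∫ l, l ^ (1 - α) ∂μ)
        ≤ (β - 1)⁻¹ * Real.log (∫ l, l ^ (1 - β) ∂μ)) := by
  constructor
  · intro α hα
    have hs : 0 < 1 - α := by linarith [hα.2]
    have h := slope_mono μ hpos hlam hposint hs (by linarith [hα.1] : (1 - α : ℝ) ≤ 1) le_rfl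
    have hL1 : Real.log (∫ l, l ^ (1 : ℝ) ∂μ) ≤ 0 := by
      have : (∫ l, l ^ (1 : ℝ) ∂μ) = ∫ l, l ∂μ := by
        refine integral_congr_ae ?_
        filter_upwards [hpos] with l hl using Real.rpow_one l
      rw [this]
      exact Real.log_nonpos (le_of_lt (by simpa [this] using hposint 1 ⟨one_pos, le_rfl⟩)) hle
    have hL : Real.log (∫ l, l ^ (1 - α) ∂μ) ≤ 0 := by
      have h' : (1 - α)⁻¹ * Real.log (∫ l, l ^ (1 - α) ∂μ) ≤ 0 := by
        simpa using h.trans (by simpa using hL1)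
      exact not_lt.1 fun hL' => absurd h' (not_le.2 (mul_pos (inv_pos.2 hs) hL'))
    have hinv : (α - 1)⁻¹ ≤ 0 := inv_nonpos.2 (by linarith [hα.2])
    nlinarith [mul_nonneg (neg_nonneg.2 hinv) (neg_nonneg.2 hL)]
  · intro α hα β hβ hab
    have ht : 0 < 1 - β := by linarith [hβ.2]
    have h := slope_mono μ hpos hlam hposint ht
      (by linarith : (1 - β : ℝ) ≤ 1 - α) (by linarith [hα.1])
    have h1 : (α - 1)⁻¹ = -(1 - α)⁻¹ := by
      rw [neg_inv, neg_sub]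
    have h2 : (β - 1)⁻¹ = -(1 - β)⁻¹ := by
      rw [neg_inv, neg_sub]
    rw [h1, h2]
    linarith [h]
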